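/- If p ∈ PGL(2,ℤ) has order 2 and commutes with [T], then p equals [S], [N], or [T]. -/

import Mathlib

open Matrix

abbrev GL2Z := GL (Fin 2) ℤ

/-- PGL(2,ℤ): the quotient of GL(2,ℤ) by its center {I, -I}. -/
abbrev PGL2Z := GL2Z ⧸ Subgroup.center GL2Z

/-- The image of a matrix in PGL(2,ℤ). -/
def cls (M : GL2Z) : PGL2Z := QuotientGroup.mk M

def Smat : GL2Z := ⟨!![0,1;1,0], !![0,1;1,0], by decide, by decide⟩
def Nmat : GL2Z := ⟨!![-1,0;0,1], !![-1,0;0,1], by decide, by decide⟩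
def Tmat : GL2Z := ⟨!![0,-1;1,0], !![0,1;-1,0], by decide, by decide⟩
def Umat : GL2Z := ⟨!![0,-1;1,1], !![1,1;-1,0], by decide, by decide⟩

def Emat : GL2Z := ⟨!![1,1;0,1], !![1,-1;0,1], by decide, by decide⟩

lemma neg_one_mem_center : (-1 : GL2Z) ∈ Subgroup.center GL2Z := by
  rw [Subgroup.mem_center_iff]
  intro g
  ext : 1
  simp

lemma det_pm (M : GL2Z) (a b c d : ℤ)
    (hA : (M : Matrix (Fin 2) (Fin 2) ℤ) = !![a, b; c, d]) :
    a * d - b * c = 1 ∨ a * d - b * c = -1 := by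
  have h1 : ((M : Matrix (Fin 2) (Fin 2) ℤ)).det *
      ((M⁻¹ : GL2Z) : Matrix (Fin 2) (Fin 2) ℤ).det = 1 := by
    rw [← Matrix.det_mul, Units.mul_inv, Matrix.det_one]
  have := Int.isUnit_iff.1 (IsUnit.of_mul_eq_one _ h1)
  rwa [hA, Matrix.det_fin_two_of] at this

lemma center_val (z : GL2Z) (hz : z ∈ Subgroup.center GL2Z) :
    (z : Matrix (Fin 2) (Fin 2) ℤ) = 1 ∨ (z : Matrix (Fin 2) (Fin 2) ℤ) = -1 := by
  rw [Subgroup.mem_center_iff] at hz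
  obtain ⟨a, b, c, d, hA⟩ : ∃ a b c d, (z : Matrix (Fin 2) (Fin 2) ℤ) = !![a, b; c, d] :=
    ⟨_, _, _, _, Matrix.eta_fin_two _⟩
  have hS : (Smat : Matrix (Fin 2) (Fin 2) ℤ) * !![a, b; c, d] =
      !![a, b; c, d] * Smat := by
    rw [← hA]; exact_mod_cast congrArg Units.val (hz Smat)
  have hE : (Emat : Matrix (Fin 2) (Fin 2) ℤ) * !![a, b; c, d] =
      !![a, b; c, d] * Emat := by
    rw [← hA]; exact_mod_cast congrArg Units.val (hz Emat)
  rw [show (Smat : Matrix (Fin 2) (Fin 2) ℤ) = !![0,1;1,0] from rfl] at hS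
  rw [show (Emat : Matrix (Fin 2) (Fin 2) ℤ) = !![1,1;0,1] from rfl] at hE
  have e1 := congrFun (congrFun hS 0) 0
  have e2 := congrFun (congrFun hS 0) 1
  have f1 := congrFun (congrFun hE 0) 0
  simp [Matrix.mul_apply, Fin.sum_univ_two] at e1 e2 f1
  have hdet := det_pm z a b c d hA
  have hc0 : c = 0 := by omega
  have hba : d = a := by omega
  have hb0 : b = 0 := by omega
  have ha : a = 1 ∨ a = -1 := by
    have haa : a * a = 1 := by
      rcases hdet with h | h
      · linear_combination h - a * hba + c * hb0
      · exfalso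
        have : a * a = -1 := by linear_combination h - a * hba + c * hb0
        nlinarith [mul_self_nonneg a]
    have h0 : (a - 1) * (a + 1) = 0 := by linear_combination haa
    rcases mul_eq_zero.mp h0 with h | h
    · left; omega
    · right; omega
  rw [hA, hc0, hba, hb0]
  rcases ha with h | h <;> rw [h]
  · left; exact Matrix.one_fin_two.symm
  · right
    ext i j
    fin_cases i <;> fin_cases j <;> simp [Matrix.one_fin_two]

lemma mk_eq_of_val (M X : GL2Z)
    (h : (M : Matrix (Fin 2) (Fin 2) ℤ) = X ∨
      (M : Matrix (Fin 2) (Fin 2) ℤ) = -(X : Matrix (Fin 2) (Fin 2) ℤ)) :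
    cls M = cls X := by
  rcases h with h | h
  · have : M = X := Units.ext h
    rw [this]
  · have hM : M = X * (-1) := by
      ext : 1
      simp [h]
    show QuotientGroup.mk M = QuotientGroup.mk X
    rw [hM, QuotientGroup.mk_mul]
    have : (QuotientGroup.mk (-1 : GL2Z) : PGL2Z) = 1 :=
      (QuotientGroup.eq_one_iff _).2 neg_one_mem_center
    rw [this, mul_one]

lemma sq_sum_one (a b : ℤ) (h : a * a + b * b = 1) :
    (a = 1 ∧ b = 0) ∨ (a = -1 ∧ b = 0) ∨ (a = 0 ∧ b = 1) ∨ (a = 0 ∧ b = -1) := by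
  have ha1 : -1 ≤ a := by nlinarith [mul_self_nonneg b, mul_self_nonneg (a+1)]
  have ha2 : a ≤ 1 := by nlinarith [mul_self_nonneg b, mul_self_nonneg (a-1)]
  have hb1 : -1 ≤ b := by nlinarith [mul_self_nonneg a, mul_self_nonneg (b+1)]
  have hb2 : b ≤ 1 := by nlinarith [mul_self_nonneg a, mul_self_nonneg (b-1)]
  interval_cases a <;> interval_cases b <;> omega

/-- If p ∈ PGL(2,ℤ) has order 2 and commutes with [T], then p is [S], [N], or [T]. -/
theorem stmt_13 (p : PGL2Z) (hp : orderOf p = 2) (hc : Commute p (cls Tmat)) :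
    p = cls Smat ∨ p = cls Nmat ∨ p = cls Tmat := by
  obtain ⟨M, rfl⟩ := QuotientGroup.mk_surjective p
  have hne : (QuotientGroup.mk M : PGL2Z) ≠ 1 := by
    intro h
    rw [h, orderOf_one] at hp
    omega
  have hc' : (QuotientGroup.mk (M * Tmat) : PGL2Z) = QuotientGroup.mk (Tmat * M) := by
    simpa [QuotientGroup.mk_mul, cls] using hc.eq
  rw [QuotientGroup.eq] at hc'
  have hz := center_val _ hc'
  have hkey : (M : Matrix (Fin 2) (Fin 2) ℤ) * Tmat = (Tmat : Matrix (Fin 2) (Fin 2) ℤ) * M ∨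
      (M : Matrix (Fin 2) (Fin 2) ℤ) * Tmat = -((Tmat : Matrix (Fin 2) (Fin 2) ℤ) * M) := by
    rcases hz with h | h
    · left
      have h1 : (M * Tmat)⁻¹ * (Tmat * M) = (1 : GL2Z) := Units.ext (by simpa using h)
      have h2 : M * Tmat = Tmat * M := inv_mul_eq_one.mp h1
      exact_mod_cast congrArg Units.val h2
    · right
      have h1 : (M * Tmat)⁻¹ * (Tmat * M) = (-1 : GL2Z) := Units.ext (by simpa using h)
      have h2 : Tmat * M = (M * Tmat) * (-1) := by
        rw [← h1]; group
      have := congrArg Units.val h2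
      simp only [Units.val_mul] at this
      rw [this]; simp
  obtain ⟨a, b, c, d, hA⟩ : ∃ a b c d, (M : Matrix (Fin 2) (Fin 2) ℤ) = !![a, b; c, d] :=
    ⟨_, _, _, _, Matrix.eta_fin_two _⟩
  have hdet := det_pm M a b c d hA
  rw [hA, show (Tmat : Matrix (Fin 2) (Fin 2) ℤ) = !![0,-1;1,0] from rfl] at hkey
  rcases hkey with h | h
  · -- commute case: M = ±1 or ±T
    have e1 := congrFun (congrFun h 0) 0
    have e2 := congrFun (congrFun h 0) 1
    have e3 := congrFun (congrFun h 1) 0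
    have e4 := congrFun (congrFun h 1) 1
    simp [Matrix.mul_apply, Fin.sum_univ_two] at e1 e2 e3 e4
    have hd_eq : d = a := by omega
    have hc_eq : c = -b := by omega
    have hsum : a * a + b * b = 1 := by
      rcases hdet with hd | hd
      · linear_combination hd - a * hd_eq + b * hc_eq
      · exfalso
        have : a * a + b * b = -1 := by linear_combination hd - a * hd_eq + b * hc_eq
        nlinarith [mul_self_nonneg a, mul_self_nonneg b]
    rcases sq_sum_one a b hsum with ⟨h1, h2⟩ | ⟨h1, h2⟩ | ⟨h1, h2⟩ | ⟨h1, h2⟩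
    · exfalso; apply hne
      have : M = 1 := Units.ext (by
        rw [hA, h1, h2, show c = 0 by omega, show d = 1 by omega]
        exact Matrix.one_fin_two.symm)
      rw [this]; rfl
    · exfalso; apply hne
      rw [QuotientGroup.eq_one_iff]
      have : M = -1 := Units.ext (by
        rw [hA, h1, h2, show c = 0 by omega, show d = -1 by omega]
        ext i j; fin_cases i <;> fin_cases j <;> simp [Matrix.one_fin_two])
      rw [this]; exact neg_one_mem_center
    · right; right
      apply mk_eq_of_val
      right
      rw [hA, h1, h2, show c = -1 by omega, show d = 0 by omega,
        show (Tmat : Matrix (Fin 2) (Fin 2) ℤ) = !![0,-1;1,0] from rfl]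
      ext i j; fin_cases i <;> fin_cases j <;> simp
    · right; right
      apply mk_eq_of_val
      left
      rw [hA, h1, h2, show c = 1 by omega, show d = 0 by omega]
      rfl
  · -- anticommute case: M = ±N or ±S
    have e1 := congrFun (congrFun h 0) 0
    have e2 := congrFun (congrFun h 0) 1
    have e3 := congrFun (congrFun h 1) 0
    have e4 := congrFun (congrFun h 1) 1
    simp [Matrix.mul_apply, Fin.sum_univ_two] at e1 e2 e3 e4
    have hd_eq : d = -a := by omega
    have hc_eq : c = b := by omega
    have hsum : a * a + b * b = 1 := by
      rcases hdet with hd | hd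
      · exfalso
        have : a * a + b * b = -1 := by linear_combination -hd + a * hd_eq - b * hc_eq
        nlinarith [mul_self_nonneg a, mul_self_nonneg b]
      · linear_combination -hd + a * hd_eq - b * hc_eq
    rcases sq_sum_one a b hsum with ⟨h1, h2⟩ | ⟨h1, h2⟩ | ⟨h1, h2⟩ | ⟨h1, h2⟩
    · right; left
      apply mk_eq_of_val
      right
      rw [hA, h1, h2, show c = 0 by omega, show d = -1 by omega,
        show (Nmat : Matrix (Fin 2) (Fin 2) ℤ) = !![-1,0;0,1] from rfl]
      ext i j; fin_cases i <;> fin_cases j <;> simp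
    · right; left
      apply mk_eq_of_val
      left
      rw [hA, h1, h2, show c = 0 by omega, show d = 1 by omega]
      rfl
    · left
      apply mk_eq_of_val
      left
      rw [hA, h1, h2, show c = 1 by omega, show d = 0 by omega]
      rfl
    · left
      apply mk_eq_of_val
      right
      rw [hA, h1, h2, show c = -1 by omega, show d = 0 by omega,
        show (Smat : Matrix (Fin 2) (Fin 2) ℤ) = !![0,1;1,0] from rfl]
      ext i j; fin_cases i <;> fin_cases j <;> simp
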